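/- Let W be a wedge in ℝ² and let G ⊆ W be a guard set with |G| ≥ 3. Then there exist a point x ∈ W and a guard g ∈ G such that x is hidden from g. -/

import Mathlib

open Set

noncomputable section

/-- The Euclidean plane ℝ². -/
abbrev Plane : Type := EuclideanSpace ℝ (Fin 2)

/-- `P` is a convex `n`-gon with vertex set `V`: `V` is a finite set of exactly `n ≥ 3`
points, `P` is its convex hull, and each point of `V` is an extreme point of `P`. -/
def IsConvexPolygon (n : ℕ) (V : Finset Plane) (P : Set Plane) : Prop :=
  3 ≤ n ∧ V.card = n ∧ P = convexHull ℝ (V : Set Plane) ∧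
    ∀ v ∈ V, v ∈ Set.extremePoints ℝ P

/-- Point `p` is hidden from guard `g` (w.r.t. guard set `G`): some other guard `b ∈ G`
lies strictly between `g` and `p`. -/
def Hidden (G : Finset Plane) (g p : Plane) : Prop :=
  ∃ b ∈ G, b ≠ g ∧ b ∈ openSegment ℝ g p

/-- `G` `k`-covers `P`: every point of `P` is visible from at least `k` guards of `G`. -/
def KCovers (G : Finset Plane) (P : Set Plane) (k : ℕ) : Prop :=
  ∀ p ∈ P, k ≤ {g ∈ (G : Set Plane) | ¬ Hidden G g p}.ncard

/-- `W` is a wedge: a closed planar convex cone with apex `a` spanned by two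
linearly independent directions `u`, `v`. -/
def IsWedge (W : Set Plane) : Prop :=
  ∃ a u v : Plane, LinearIndependent ℝ ![u, v] ∧
    W = {x | ∃ s t : ℝ, 0 ≤ s ∧ 0 ≤ t ∧ x = a + s • u + t • v}

lemma interior_pick {si ti sj tj : ℝ} (hsi : 0 ≤ si) (hti : 0 ≤ ti)
    (hsj : 0 < sj) (htj : 0 < tj) :
    ∃ ε : ℝ, 0 < ε ∧ 0 ≤ sj + ε * (sj - si) ∧ 0 ≤ tj + ε * (tj - ti) := by
  refine ⟨min (sj/(sj+si+1)) (tj/(tj+ti+1)), by positivity, ?_, ?_⟩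
  · have h1 : min (sj/(sj+si+1)) (tj/(tj+ti+1)) ≤ sj/(sj+si+1) := min_le_left _ _
    have h2 : (0:ℝ) < sj+si+1 := by linarith
    have h3 : min (sj/(sj+si+1)) (tj/(tj+ti+1)) * (sj+si+1) ≤ sj := by
      rw [← le_div_iff₀ h2]; exact h1
    have h4 : (0:ℝ) ≤ min (sj/(sj+si+1)) (tj/(tj+ti+1)) := le_min (by positivity) (by positivity)
    nlinarith
  · have h1 : min (sj/(sj+si+1)) (tj/(tj+ti+1)) ≤ tj/(tj+ti+1) := min_le_right _ _
    have h2 : (0:ℝ) < tj+ti+1 := by linarith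
    have h3 : min (sj/(sj+si+1)) (tj/(tj+ti+1)) * (tj+ti+1) ≤ tj := by
      rw [← le_div_iff₀ h2]; exact h1
    have h4 : (0:ℝ) ≤ min (sj/(sj+si+1)) (tj/(tj+ti+1)) := le_min (by positivity) (by positivity)
    nlinarith

lemma axisS_pick {i j : Fin 3} (s t : Fin 3 → ℝ) (ht : ∀ k, 0 ≤ t k) (hij : i ≠ j)
    (hsi : s i = 0) (hsj : s j = 0) :
    ∃ i j : Fin 3, i ≠ j ∧ ∃ ε : ℝ, 0 < ε ∧
      0 ≤ s j + ε * (s j - s i) ∧ 0 ≤ t j + ε * (t j - t i) := by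
  rcases le_total (t i) (t j) with h | h
  · exact ⟨i, j, hij, 1, one_pos, by simp [hsi, hsj], by nlinarith [ht i, ht j]⟩
  · exact ⟨j, i, hij.symm, 1, one_pos, by simp [hsi, hsj], by nlinarith [ht i, ht j]⟩

lemma axisT_pick {i j : Fin 3} (s t : Fin 3 → ℝ) (hs : ∀ k, 0 ≤ s k) (hij : i ≠ j)
    (hti : t i = 0) (htj : t j = 0) :
    ∃ i j : Fin 3, i ≠ j ∧ ∃ ε : ℝ, 0 < ε ∧
      0 ≤ s j + ε * (s j - s i) ∧ 0 ≤ t j + ε * (t j - t i) := by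
  rcases le_total (s i) (s j) with h | h
  · exact ⟨i, j, hij, 1, one_pos, by nlinarith [hs i, hs j], by simp [hti, htj]⟩
  · exact ⟨j, i, hij.symm, 1, one_pos, by nlinarith [hs i, hs j], by simp [hti, htj]⟩

lemma pick3 (s t : Fin 3 → ℝ) (hs : ∀ i, 0 ≤ s i) (ht : ∀ i, 0 ≤ t i) :
    ∃ i j : Fin 3, i ≠ j ∧ ∃ ε : ℝ, 0 < ε ∧
      0 ≤ s j + ε * (s j - s i) ∧ 0 ≤ t j + ε * (t j - t i) := by
  by_cases h : ∃ k, 0 < s k ∧ 0 < t k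
  · obtain ⟨k, hk1, hk2⟩ := h
    obtain ⟨i, hik⟩ := exists_ne k
    obtain ⟨ε, hε, h1, h2⟩ := interior_pick (hs i) (ht i) hk1 hk2
    exact ⟨i, k, hik, ε, hε, h1, h2⟩
  · push_neg at h
    have h' : ∀ k, s k = 0 ∨ t k = 0 := by
      intro k
      rcases lt_or_eq_of_le (hs k) with h1 | h1
      · exact Or.inr (le_antisymm (h k h1) (ht k))
      · exact Or.inl h1.symm
    have d01 : (0 : Fin 3) ≠ 1 := by decide
    have d02 : (0 : Fin 3) ≠ 2 := by decide
    have d12 : (1 : Fin 3) ≠ 2 := by decide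
    rcases h' 0 with h0 | h0 <;> rcases h' 1 with h1 | h1 <;> rcases h' 2 with h2 | h2
    · exact axisS_pick s t ht d01 h0 h1
    · exact axisS_pick s t ht d01 h0 h1
    · exact axisS_pick s t ht d02 h0 h2
    · exact axisT_pick s t hs d12 h1 h2
    · exact axisS_pick s t ht d12 h1 h2
    · exact axisT_pick s t hs d02 h0 h2
    · exact axisT_pick s t hs d01 h0 h1
    · exact axisT_pick s t hs d01 h0 h1

/-- Any placement of at least 3 guards in a wedge creates a point
hidden from some guard. -/
theorem statement15 (W : Set Plane) (hW : IsWedge W) (G : Finset Plane)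
    (hG : ↑G ⊆ W) (hcard : 3 ≤ G.card) :
    ∃ x ∈ W, ∃ g ∈ G, Hidden G g x := by
  obtain ⟨a, u, v, hli, hWeq⟩ := hW
  obtain ⟨p1, hp1, p2, hp2, p3, hp3, h12, h13, h23⟩ :=
    Finset.two_lt_card.mp (show 2 < G.card by omega)
  have mem : ∀ p ∈ G, ∃ s t : ℝ, 0 ≤ s ∧ 0 ≤ t ∧ p = a + s • u + t • v := by
    intro p hp
    have := hG hp
    rw [hWeq] at this
    exact this
  obtain ⟨s1, t1, hs1, ht1, he1⟩ := mem p1 hp1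
  obtain ⟨s2, t2, hs2, ht2, he2⟩ := mem p2 hp2
  obtain ⟨s3, t3, hs3, ht3, he3⟩ := mem p3 hp3
  set P : Fin 3 → Plane := ![p1, p2, p3] with hP
  set S : Fin 3 → ℝ := ![s1, s2, s3] with hS
  set T : Fin 3 → ℝ := ![t1, t2, t3] with hT
  have hSnn : ∀ i, 0 ≤ S i := by
    intro i; fin_cases i <;> simpa [hS] using by assumption
  have hTnn : ∀ i, 0 ≤ T i := by
    intro i; fin_cases i <;> simpa [hT] using by assumption
  have hrep : ∀ i, P i = a + S i • u + T i • v := by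
    intro i; fin_cases i <;> simp [hP, hS, hT, he1, he2, he3]
  have hPG : ∀ i, P i ∈ G := by
    intro i; fin_cases i <;> simp [hP, hp1, hp2, hp3]
  have hPinj : ∀ i j : Fin 3, i ≠ j → P i ≠ P j := by
    intro i j hij
    fin_cases i <;> fin_cases j <;>
      simp only [hP, Matrix.cons_val_zero, Matrix.cons_val_one, Matrix.head_cons,
        Matrix.cons_val_two, Matrix.tail_cons] <;>
      first
        | exact absurd rfl hij
        | exact h12 | exact h13 | exact h23
        | exact h12.symm | exact h13.symm | exact h23.symm
  obtain ⟨i, j, hij, ε, hε, hsx, htx⟩ := pick3 S T hSnn hTnn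
  set g := P i
  set b := P j
  set x : Plane := b + ε • (b - g) with hx
  have hεp : (0:ℝ) < 1 + ε := by linarith
  refine ⟨x, ?_, g, hPG i, b, hPG j, hPinj j i hij.symm, ?_⟩
  · rw [hWeq]
    refine ⟨S j + ε * (S j - S i), T j + ε * (T j - T i), hsx, htx, ?_⟩
    rw [hx, show b = a + S j • u + T j • v from hrep j,
      show g = a + S i • u + T i • v from hrep i]
    module
  · refine ⟨ε / (1 + ε), 1 / (1 + ε), by positivity, by positivity, ?_, ?_⟩
    · field_simp
      ring
    · rw [hx]
      match_scalars <;> field_simp <;> ring
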